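/- Let (C; ≤) be a preorder with 𝒞 the class of ≤-up sets, let Q be a preorder, A : C → Q, and let F be a finite Q-labeled forest realized as strings (F ⊆ ω⁺, ordered by prefix, labels f : F → Q). Suppose A is majorized by an F-family {U_τ}_{τ∈F} over 𝒞 (i.e., each U_τ ∈ 𝒞, U_τ ⊇ U_{τi} for τi ∈ F, ⋃_τ U_τ = C, and A(c) ≤ f(τ) whenever c ∈ Ũ_τ := U_τ \ ⋃{U_{τi} : τi ∈ F}). If T is a finite Q-labeled tree with T ≤_h (C; ≤, A) — i.e., there is a monotone φ : (T,⊑) → (C,≤) with t(τ) ≤ A(φ(τ)) for all τ ∈ T — then T ≤_h F. -/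

import Mathlib

/-- A finite forest realized as a finite set of nonempty strings over `ℕ`,
closed under nonempty prefixes. -/
def IsForest (F : Finset (List ℕ)) : Prop :=
  (∀ s ∈ F, s ≠ []) ∧ ∀ s ∈ F, ∀ t : List ℕ, t <+: s → t ≠ [] → t ∈ F

/-- A tree is a forest with a least element (root). -/
def IsTree (T : Finset (List ℕ)) : Prop :=
  IsForest T ∧ ∃ r ∈ T, ∀ s ∈ T, r <+: s

/-- The component `Ũ_τ = U_τ \ ⋃ { U_{τi} : τi ∈ F }` of an `F`-family. -/
def comp {C : Type*} (F : Finset (List ℕ)) (U : List ℕ → Set C) (τ : List ℕ) : Set C :=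
  U τ \ ⋃ (i : ℕ) (_ : τ ++ [i] ∈ F), U (τ ++ [i])

open Classical in
/-- Walk down from `τ` through children of the forest whose `U`-set contains `c`. -/
noncomputable def descend {C : Type*} (F : Finset (List ℕ)) (U : List ℕ → Set C) (c : C) :
    ℕ → List ℕ → List ℕ
  | 0, τ => τ
  | n+1, τ =>
    if h : ∃ i : ℕ, τ ++ [i] ∈ F ∧ c ∈ U (τ ++ [i]) then
      descend F U c n (τ ++ [h.choose])
    else τ

theorem descend_zero {C : Type*} (F : Finset (List ℕ)) (U : List ℕ → Set C) (c : C)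
    (τ : List ℕ) : descend F U c 0 τ = τ := rfl

open Classical in
theorem descend_succ {C : Type*} (F : Finset (List ℕ)) (U : List ℕ → Set C) (c : C)
    (n : ℕ) (τ : List ℕ) :
    descend F U c (n+1) τ =
      if h : ∃ i : ℕ, τ ++ [i] ∈ F ∧ c ∈ U (τ ++ [i]) then
        descend F U c n (τ ++ [h.choose])
      else τ := rfl

theorem descend_spec {C : Type*} (F : Finset (List ℕ)) (U : List ℕ → Set C) (c : C)
    (B : ℕ) (hB : ∀ σ ∈ F, σ.length ≤ B) :
    ∀ n τ, τ ∈ F → c ∈ U τ → B ≤ n + τ.length →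
      τ <+: descend F U c n τ ∧ descend F U c n τ ∈ F ∧ c ∈ comp F U (descend F U c n τ) := by
  intro n
  induction n with
  | zero =>
    intro τ hτ hc hlen
    rw [descend_zero]
    refine ⟨List.prefix_refl _, hτ, hc, ?_⟩
    simp only [Set.mem_iUnion, not_exists]
    intro i hi _
    have := hB _ hi
    simp only [List.length_append, List.length_singleton] at this
    omega
  | succ n ih =>
    intro τ hτ hc hlen
    by_cases h : ∃ i : ℕ, τ ++ [i] ∈ F ∧ c ∈ U (τ ++ [i])
    · have heq : descend F U c (n+1) τ = descend F U c n (τ ++ [h.choose]) := by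
        rw [descend, dif_pos h]
      obtain ⟨hi, hci⟩ := h.choose_spec
      have hlen' : B ≤ n + (τ ++ [h.choose]).length := by
        simp only [List.length_append, List.length_singleton]; omega
      obtain ⟨hpre, hmem, hcomp⟩ := ih (τ ++ [h.choose]) hi hci hlen'
      rw [heq]
      exact ⟨(List.prefix_append τ [h.choose]).trans hpre, hmem, hcomp⟩
    · have heq : descend F U c (n+1) τ = τ := by rw [descend, dif_neg h]
      rw [heq]
      refine ⟨List.prefix_refl _, hτ, hc, ?_⟩
      simp only [Set.mem_iUnion, not_exists]
      intro i hi hci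
      exact h ⟨i, hi, hci⟩

/-- `psi n s` : image of a node `s` of length `n+1`, defined by recursion along the branch. -/
noncomputable def psi {C : Type*} (F : Finset (List ℕ)) (U : List ℕ → Set C) (φ : List ℕ → C)
    (root : C → List ℕ) (B : ℕ) : ℕ → List ℕ → List ℕ
  | 0, s => descend F U (φ s) B (root (φ s))
  | n+1, s => descend F U (φ s) B (psi F U φ root B n s.dropLast)

/-- If `A : C → Q` is majorized by an `F`-family of up-sets and `T ≤_h (C; ≤, A)` for a
finite `Q`-labeled tree `T`, then `T ≤_h F`. -/
theorem stmt12 {C Q : Type*} [Preorder C] [Preorder Q] (A : C → Q)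
    (F : Finset (List ℕ)) (fF : List ℕ → Q) (hF : IsForest F)
    (U : List ℕ → Set C)
    (hup : ∀ τ ∈ F, IsUpperSet (U τ))
    (hnest : ∀ τ ∈ F, ∀ i : ℕ, τ ++ [i] ∈ F → U (τ ++ [i]) ⊆ U τ)
    (hcover : (⋃ τ ∈ F, U τ) = Set.univ)
    (hmaj : ∀ τ ∈ F, ∀ x ∈ comp F U τ, A x ≤ fF τ)
    (T : Finset (List ℕ)) (tT : List ℕ → Q) (hT : IsTree T)
    (φ : List ℕ → C)
    (hφmono : ∀ s ∈ T, ∀ t ∈ T, s <+: t → φ s ≤ φ t)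
    (hφlab : ∀ s ∈ T, tT s ≤ A (φ s)) :
    ∃ ψ : List ℕ → List ℕ, (∀ s ∈ T, ψ s ∈ F) ∧
      (∀ s ∈ T, ∀ t ∈ T, s <+: t → ψ s <+: ψ t) ∧
      (∀ s ∈ T, tT s ≤ fF (ψ s)) := by
  classical
  set B := F.sup List.length with hBdef
  have hB : ∀ σ ∈ F, σ.length ≤ B := fun σ hσ => Finset.le_sup hσ
  -- choose a starting node for every point of C
  have hroot : ∀ c : C, ∃ τ, τ ∈ F ∧ c ∈ U τ := by
    intro c
    have : c ∈ (⋃ τ ∈ F, U τ) := by rw [hcover]; trivial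
    simpa using this
  choose root hrF hrU using hroot
  set ψ : List ℕ → List ℕ := fun s => psi F U φ root B (s.length - 1) s with hψdef
  -- key invariant
  have key : ∀ n, ∀ s ∈ T, s.length = n + 1 →
      psi F U φ root B n s ∈ F ∧ φ s ∈ comp F U (psi F U φ root B n s) := by
    intro n
    induction n with
    | zero =>
      intro s hs _
      have := descend_spec F U (φ s) B hB B (root (φ s)) (hrF (φ s)) (hrU (φ s)) (by omega)
      exact ⟨this.2.1, this.2.2⟩
    | succ n ih =>
      intro s hs hlen
      have hdrop_pre : s.dropLast <+: s := List.dropLast_prefix s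
      have hdrop_len : s.dropLast.length = n + 1 := by
        rw [List.length_dropLast]; omega
      have hdrop_ne : s.dropLast ≠ [] := by
        intro h; rw [h] at hdrop_len; simp at hdrop_len
      have hdropT : s.dropLast ∈ T := hT.1.2 s hs s.dropLast hdrop_pre hdrop_ne
      obtain ⟨hmemF, hcomp⟩ := ih s.dropLast hdropT hdrop_len
      have hle : φ s.dropLast ≤ φ s := hφmono s.dropLast hdropT s hs hdrop_pre
      have hU : φ s ∈ U (psi F U φ root B n s.dropLast) :=
        hup _ hmemF hle hcomp.1
      have := descend_spec F U (φ s) B hB B _ hmemF hU (by omega)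
      exact ⟨this.2.1, this.2.2⟩
  have hkey : ∀ s ∈ T, ψ s ∈ F ∧ φ s ∈ comp F U (ψ s) := by
    intro s hs
    have hne : s ≠ [] := hT.1.1 s hs
    have hlen : s.length = (s.length - 1) + 1 := by
      have : 0 < s.length := List.length_pos_iff.mpr hne
      omega
    exact key (s.length - 1) s hs hlen
  -- step monotonicity : ψ (dropLast t) <+: ψ t
  have hstep : ∀ t ∈ T, 2 ≤ t.length → ψ t.dropLast <+: ψ t := by
    intro t ht hlt
    have hdrop_pre : t.dropLast <+: t := List.dropLast_prefix t
    have hdrop_len : t.dropLast.length = t.length - 1 := List.length_dropLast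
    have hdrop_ne : t.dropLast ≠ [] := by
      intro h; rw [h] at hdrop_len; simp at hdrop_len; omega
    have hdropT : t.dropLast ∈ T := hT.1.2 t ht t.dropLast hdrop_pre hdrop_ne
    obtain ⟨hmemF, hcomp⟩ := hkey t.dropLast hdropT
    have hle : φ t.dropLast ≤ φ t := hφmono t.dropLast hdropT t ht hdrop_pre
    have hU : φ t ∈ U (ψ t.dropLast) := hup _ hmemF hle hcomp.1
    have hspec := descend_spec F U (φ t) B hB B (ψ t.dropLast) hmemF hU (by omega)
    have heq : ψ t = descend F U (φ t) B (ψ t.dropLast) := by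
      have h1 : t.length - 1 = (t.length - 2) + 1 := by omega
      have h2 : t.dropLast.length - 1 = t.length - 2 := by rw [hdrop_len]; omega
      rw [hψdef]
      simp only
      rw [h1, psi, h2]
    rw [heq]
    exact hspec.1
  -- full monotonicity by strong induction on length of t
  have hmono : ∀ n, ∀ s ∈ T, ∀ t ∈ T, t.length = n → s <+: t → ψ s <+: ψ t := by
    intro n
    induction n using Nat.strong_induction_on with
    | _ n ih =>
      intro s hs t ht hlen hst
      by_cases hst' : s = t
      · rw [hst']
      · have hslen : s.length < t.length := by
          rcases hst with ⟨u, hu⟩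
          have : s.length + u.length = t.length := by rw [← hu]; simp
          rcases u with _ | ⟨a, u⟩
          · exfalso; apply hst'; rw [← hu]; simp
          · simp at this; omega
        have hspos : 0 < s.length := List.length_pos_iff.mpr (hT.1.1 s hs)
        have h2 : 2 ≤ t.length := by omega
        have hdrop_pre : t.dropLast <+: t := List.dropLast_prefix t
        have hdrop_len : t.dropLast.length = t.length - 1 := List.length_dropLast
        have hdrop_ne : t.dropLast ≠ [] := by
          intro h; rw [h] at hdrop_len; simp at hdrop_len; omega
        have hdropT : t.dropLast ∈ T := hT.1.2 t ht t.dropLast hdrop_pre hdrop_ne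
        have hsd : s <+: t.dropLast :=
          List.prefix_of_prefix_length_le hst hdrop_pre (by omega)
        have h1 : ψ s <+: ψ t.dropLast :=
          ih t.dropLast.length (by omega) s hs t.dropLast hdropT rfl hsd
        exact h1.trans (hstep t ht h2)
  refine ⟨ψ, fun s hs => (hkey s hs).1, ?_, ?_⟩
  · intro s hs t ht hst
    exact hmono t.length s hs t ht rfl hst
  · intro s hs
    exact (hφlab s hs).trans (hmaj _ (hkey s hs).1 _ (hkey s hs).2)
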